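/- Let n ≥ 1. Define the separable potentials V_i^{(k)} : ℝ^n → ℝ (i = 1,…,n, k ≥ 0) recursively by V_i^{(0)}(q) = δ_{in} and V_i^{(k+1)} = V_{i+1}^{(k)} − q_i V_1^{(k)}, where V_{n+1}^{(k)} := 0. Then for every λ ∈ ℝ^n, every k ≥ 0 and every r ∈ {1,…,n}: Σ_{j=1}^{n} V_j^{(k)}(q(λ)) · λ_r^{n−j} = λ_r^{k}, where q(λ) = (q_1(λ),…,q_n(λ)) are the Viète polynomials of λ. -/

import Mathlib

open scoped BigOperators

/-- The Viète polynomials: `vieta n lam i` is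
`q_{i+1}(λ) = (-1)^{i+1} ∑_{s_1<…<s_{i+1}} λ_{s_1}⋯λ_{s_{i+1}}` (0-based index `i`). -/
noncomputable def vieta (n : ℕ) (lam : Fin n → ℝ) (i : Fin n) : ℝ :=
  (-1 : ℝ) ^ ((i : ℕ) + 1) *
    ∑ s ∈ (Finset.univ : Finset (Fin n)).powersetCard ((i : ℕ) + 1), ∏ j ∈ s, lam j

/-- The separable potentials `V_i^{(k)}` (0-based index `i`, so `Vpot n k q i = V_{i+1}^{(k)}(q)`),
defined by `V_i^{(0)} = δ_{in}` and `V_i^{(k+1)} = V_{i+1}^{(k)} − q_i V_1^{(k)}`,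
with the convention `V_{n+1}^{(k)} = 0`. -/
noncomputable def Vpot (n : ℕ) : ℕ → (Fin n → ℝ) → Fin n → ℝ
  | 0, _, i => if (i : ℕ) = n - 1 then 1 else 0
  | k + 1, q, i =>
      (if h : (i : ℕ) + 1 < n then Vpot n k q ⟨(i : ℕ) + 1, h⟩ else 0)
        - q i * Vpot n k q ⟨0, i.pos⟩

/-- For every `λ ∈ ℝ^n`, every `k ≥ 0` and every `r`:
`∑_{j=1}^n V_j^{(k)}(q(λ)) · λ_r^{n−j} = λ_r^k`, where `q(λ)` are the Viète polynomials. -/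
lemma vieta_sum (n : ℕ) (lam : Fin n → ℝ) (r : Fin n) :
    ∑ j : Fin n, vieta n lam j * lam r ^ (n - 1 - (j:ℕ)) = - lam r ^ n := by
  set s : Multiset ℝ := Finset.univ.val.map lam with hs
  have hcard : Multiset.card s = n := by simp [hs]
  have h0 : Polynomial.eval (lam r) (s.map fun t => Polynomial.X - Polynomial.C t).prod = 0 := by
    rw [Polynomial.eval_multiset_prod]
    apply Multiset.prod_eq_zero
    have : (Polynomial.X - Polynomial.C (lam r)) ∈ s.map fun t => Polynomial.X - Polynomial.C t :=
      Multiset.mem_map_of_mem _ (by simp [hs])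
    have := Multiset.mem_map_of_mem (Polynomial.eval (lam r)) this
    simpa using this
  rw [Multiset.prod_X_sub_X_eq_sum_esymm s, hcard] at h0
  simp only [Polynomial.eval_finset_sum, Polynomial.eval_mul, Polynomial.eval_pow,
    Polynomial.eval_C, Polynomial.eval_X, Polynomial.eval_one, Polynomial.eval_neg] at h0
  rw [Finset.sum_range_succ'] at h0
  have he0 : s.esymm 0 = 1 := by simp [Multiset.esymm]
  simp only [pow_zero, one_mul, Nat.sub_zero, he0] at h0
  have hes : ∀ j : ℕ, s.esymm (j+1) =
      ∑ t ∈ (Finset.univ : Finset (Fin n)).powersetCard (j+1), ∏ i ∈ t, lam i := by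
    intro j
    rw [hs, Finset.esymm_map_val]
  rw [← Fin.sum_univ_eq_sum_range (fun j => (-1:ℝ)^(j+1) * (s.esymm (j+1) * lam r ^ (n - (j+1)))) n] at h0
  have : ∑ j : Fin n, vieta n lam j * lam r ^ (n - 1 - (j:ℕ))
      = ∑ j : Fin n, (-1:ℝ)^((j:ℕ)+1) * (s.esymm ((j:ℕ)+1) * lam r ^ (n - ((j:ℕ)+1))) := by
    apply Finset.sum_congr rfl
    intro j _
    have hexp : n - 1 - (j:ℕ) = n - ((j:ℕ)+1) := by omega
    rw [hes, vieta, hexp]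
    ring
  rw [this]
  linarith [h0]

theorem separable_potentials_generating (n : ℕ) (hn : 1 ≤ n) (lam : Fin n → ℝ) (k : ℕ)
    (r : Fin n) :
    ∑ j : Fin n, Vpot n k (fun i => vieta n lam i) j * lam r ^ (n - 1 - (j : ℕ))
      = lam r ^ k := by
  obtain ⟨m, rfl⟩ : ∃ m, n = m + 1 := ⟨n - 1, by omega⟩
  set q : Fin (m+1) → ℝ := fun i => vieta (m+1) lam i with hq
  set x : ℝ := lam r with hx
  induction k with
  | zero =>
      rw [Finset.sum_eq_single (Fin.last m)]
      · simp [Vpot]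
      · intro j _ hj
        have : (j : ℕ) ≠ m := fun h => hj (Fin.ext (by simp [h]))
        simp [Vpot, this]
      · simp
  | succ k ih =>
      have hsplit : ∑ j : Fin (m+1), Vpot (m+1) (k+1) q j * x ^ (m + 1 - 1 - (j : ℕ))
          = (∑ j : Fin (m+1),
              (if h : (j : ℕ) + 1 < m + 1 then Vpot (m+1) k q ⟨(j : ℕ) + 1, h⟩ else 0)
                * x ^ (m + 1 - 1 - (j : ℕ)))
            - Vpot (m+1) k q ⟨0, Nat.succ_pos m⟩ *
              ∑ j : Fin (m+1), q j * x ^ (m + 1 - 1 - (j : ℕ)) := by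
        rw [Finset.mul_sum, ← Finset.sum_sub_distrib]
        apply Finset.sum_congr rfl
        intro j _
        show (_ - _) * _ = _
        ring
      have hA : ∑ j : Fin (m+1),
            (if h : (j : ℕ) + 1 < m + 1 then Vpot (m+1) k q ⟨(j : ℕ) + 1, h⟩ else 0)
              * x ^ (m + 1 - 1 - (j : ℕ))
          = ∑ j : Fin m, Vpot (m+1) k q j.succ * x ^ (m - (j : ℕ)) := by
        rw [Fin.sum_univ_castSucc]
        simp only [Fin.coe_castSucc, Fin.val_last, Nat.add_sub_cancel]
        rw [dif_neg (lt_irrefl (m+1)), zero_mul, add_zero]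
        apply Finset.sum_congr rfl
        intro j _
        rw [dif_pos (by omega : (j : ℕ) + 1 < m + 1)]
        rfl
      have hpeel : Vpot (m+1) k q ⟨0, Nat.succ_pos m⟩ * x ^ m
            + ∑ j : Fin m, Vpot (m+1) k q j.succ * x ^ (m - 1 - (j : ℕ)) = x ^ k := by
        rw [← ih]
        rw [Fin.sum_univ_succ]
        simp only [Fin.val_zero, Fin.val_succ, Nat.add_sub_cancel, Nat.sub_zero]
        congr 1
        apply Finset.sum_congr rfl
        intro j _
        congr 2
        omega
      have hkey : ∑ j : Fin (m+1), q j * x ^ (m + 1 - 1 - (j : ℕ)) = - x ^ (m+1) := by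
        simpa using vieta_sum (m+1) lam r
      have hAx : ∑ j : Fin m, Vpot (m+1) k q j.succ * x ^ (m - (j : ℕ))
          = x * ∑ j : Fin m, Vpot (m+1) k q j.succ * x ^ (m - 1 - (j : ℕ)) := by
        rw [Finset.mul_sum]
        apply Finset.sum_congr rfl
        intro j _
        have : m - (j : ℕ) = (m - 1 - (j : ℕ)) + 1 := by omega
        rw [this, pow_succ]
        ring
      rw [hsplit, hA, hkey, hAx]
      have h2 : ∑ j : Fin m, Vpot (m+1) k q j.succ * x ^ (m - 1 - (j : ℕ))
          = x ^ k - Vpot (m+1) k q ⟨0, Nat.succ_pos m⟩ * x ^ m := by linarith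
      rw [h2]
      ring
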